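/- arXiv:2602.01409 — 2 statements merged into one kernel-verified Lean document; each statement's English description precedes it below -/
import Mathlib

section
/- Let b : ℕ → ℝ satisfy b(0) = 1 and the Hecke recursion b(1)·b(r) = b(r+1) + b(r−1) for all integers r ≥ 1. Then for every natural number m, b(1)^{2m} = Σ_{r=0}^{m} ( C(2m, m−r) − C(2m, m−r−1) ) · b(2r), where C(n, j) denotes the binomial coefficient and C(n, −1) = 0. -/
/-- The binomial coefficient `C(n, j)` with integer second argument,
extended by the convention `C(n, j) = 0` for `j < 0`. -/
noncomputable def binomC (n : ℕ) (j : ℤ) : ℝ :=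
  if j < 0 then 0 else (n.choose j.toNat : ℝ)

/-- Extension of `b` to integer indices, antisymmetric about `-1`. -/
noncomputable def Bfun (b : ℕ → ℝ) : ℤ → ℝ := fun r =>
  if 0 ≤ r then b r.toNat else if r = -1 then 0 else -(b (-r - 2).toNat)

lemma Bfun_ofNat (b : ℕ → ℝ) (n : ℕ) : Bfun b (n : ℤ) = b n := by
  simp [Bfun]

lemma Bfun_neg (b : ℕ → ℝ) (r : ℤ) (h : r ≤ -2) : Bfun b r = -(b (-r - 2).toNat) := by
  rw [Bfun, if_neg (by omega), if_neg (by omega)]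

lemma Bfun_rec (b : ℕ → ℝ) (hb0 : b 0 = 1)
    (hrec : ∀ r : ℕ, 1 ≤ r → b 1 * b r = b (r + 1) + b (r - 1)) (r : ℤ) :
    b 1 * Bfun b r = Bfun b (r + 1) + Bfun b (r - 1) := by
  rcases le_or_gt 1 r with h | h
  · lift r to ℕ using (by omega)
    have hn : 1 ≤ r := by exact_mod_cast h
    have e1 : (r : ℤ) + 1 = ((r + 1 : ℕ) : ℤ) := by push_cast; ring
    have e2 : (r : ℤ) - 1 = ((r - 1 : ℕ) : ℤ) := by omega
    rw [e1, e2, Bfun_ofNat, Bfun_ofNat, Bfun_ofNat]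
    exact hrec r hn
  rcases eq_or_ne r 0 with rfl | h0
  · norm_num [Bfun, hb0]
  rcases eq_or_ne r (-1) with rfl | h1
  · norm_num [Bfun, hb0]
  · obtain ⟨n, rfl⟩ : ∃ n : ℕ, r = -(n : ℤ) - 2 := ⟨(-r - 2).toNat, by omega⟩
    have e0 : Bfun b (-(n : ℤ) - 2) = -(b n) := by
      rw [Bfun_neg _ _ (by omega)]
      have : (-(-(n : ℤ) - 2) - 2).toNat = n := by omega
      rw [this]
    rcases Nat.eq_zero_or_pos n with rfl | hn
    · have ea : Bfun b (-((0 : ℕ) : ℤ) - 2 + 1) = 0 := by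
        rw [Bfun, if_neg (by omega), if_pos (by omega)]
      have eb : Bfun b (-((0 : ℕ) : ℤ) - 2 - 1) = -(b 1) := by
        rw [Bfun_neg _ _ (by omega)]
        have : (-(-((0 : ℕ) : ℤ) - 2 - 1) - 2).toNat = 1 := by omega
        rw [this]
      rw [e0, ea, eb]
      simp [hb0]
    · have ea : Bfun b (-(n : ℤ) - 2 + 1) = -(b (n - 1)) := by
        rw [Bfun_neg _ _ (by omega)]
        have : (-(-(n : ℤ) - 2 + 1) - 2).toNat = n - 1 := by omega
        rw [this]
      have eb : Bfun b (-(n : ℤ) - 2 - 1) = -(b (n + 1)) := by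
        rw [Bfun_neg _ _ (by omega)]
        have : (-(-(n : ℤ) - 2 - 1) - 2).toNat = n + 1 := by omega
        rw [this]
      rw [e0, ea, eb]
      have := hrec n hn
      linarith

lemma pow_eq_sum_Bfun (b : ℕ → ℝ) (hb0 : b 0 = 1)
    (hrec : ∀ r : ℕ, 1 ≤ r → b 1 * b r = b (r + 1) + b (r - 1)) (n : ℕ) :
    (b 1) ^ n = ∑ j ∈ Finset.range (n + 1),
      (n.choose j : ℝ) * Bfun b ((n : ℤ) - 2 * j) := by
  induction n with
  | zero => simpa [Bfun] using hb0.symm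
  | succ n ih =>
    have step : (b 1) ^ (n + 1) =
        (∑ j ∈ Finset.range (n + 1), (n.choose j : ℝ) * Bfun b ((n : ℤ) - 2 * j + 1))
        + ∑ j ∈ Finset.range (n + 1), (n.choose j : ℝ) * Bfun b ((n : ℤ) - 2 * j - 1) := by
      rw [pow_succ, ih, Finset.sum_mul, ← Finset.sum_add_distrib]
      refine Finset.sum_congr rfl fun j _ => ?_
      rw [mul_assoc, mul_comm (Bfun b _) (b 1), Bfun_rec b hb0 hrec]
      ring
    have hS1 : (∑ j ∈ Finset.range (n + 1), (n.choose j : ℝ) * Bfun b ((n : ℤ) - 2 * j + 1))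
        = (∑ j ∈ Finset.range (n + 1), (n.choose (j + 1) : ℝ) * Bfun b ((n : ℤ) - 2 * j - 1))
          + Bfun b ((n : ℤ) + 1) := by
      rw [Finset.sum_range_succ' (fun j => (n.choose j : ℝ) * Bfun b ((n : ℤ) - 2 * j + 1)) n]
      rw [Finset.sum_range_succ (fun j => (n.choose (j + 1) : ℝ) * Bfun b ((n : ℤ) - 2 * j - 1)) n]
      have hlast : ((n.choose (n + 1) : ℕ) : ℝ) * Bfun b ((n : ℤ) - 2 * n - 1) = 0 := by
        rw [Nat.choose_succ_self]; norm_num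
      have hfirst : ((n.choose 0 : ℕ) : ℝ) * Bfun b ((n : ℤ) - 2 * (0 : ℕ) + 1)
          = Bfun b ((n : ℤ) + 1) := by
        rw [Nat.choose_zero_right]
        push_cast
        ring_nf
      rw [hlast, hfirst, add_zero]
      congr 1
      refine Finset.sum_congr rfl fun j _ => ?_
      congr 1
      push_cast
      ring
    rw [step, hS1]
    have hT : (∑ j ∈ Finset.range (n + 1 + 1),
          ((n + 1).choose j : ℝ) * Bfun b (((n + 1 : ℕ) : ℤ) - 2 * j))
        = (∑ j ∈ Finset.range (n + 1),
            ((n + 1).choose (j + 1) : ℝ) * Bfun b ((n : ℤ) - 2 * j - 1))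
          + Bfun b ((n : ℤ) + 1) := by
      rw [Finset.sum_range_succ'
        (fun j => ((n + 1).choose j : ℝ) * Bfun b (((n + 1 : ℕ) : ℤ) - 2 * j)) (n + 1)]
      congr 1
      · refine Finset.sum_congr rfl fun j _ => ?_
        congr 1
        push_cast
        ring
      · rw [Nat.choose_zero_right]
        push_cast
        ring_nf
    rw [hT]
    have hsplit : ∀ j ∈ Finset.range (n + 1),
        ((n + 1).choose (j + 1) : ℝ) * Bfun b ((n : ℤ) - 2 * j - 1)
        = (n.choose (j + 1) : ℝ) * Bfun b ((n : ℤ) - 2 * j - 1)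
          + (n.choose j : ℝ) * Bfun b ((n : ℤ) - 2 * j - 1) := by
      intro j _
      rw [Nat.choose_succ_succ]
      push_cast
      ring
    rw [Finset.sum_congr rfl hsplit, Finset.sum_add_distrib]
    ring

theorem even_power_hecke_expansion (b : ℕ → ℝ) (hb0 : b 0 = 1)
    (hrec : ∀ r : ℕ, 1 ≤ r → b 1 * b r = b (r + 1) + b (r - 1)) :
    ∀ m : ℕ, (b 1) ^ (2 * m) =
      ∑ r ∈ Finset.range (m + 1),
        (binomC (2 * m) ((m : ℤ) - (r : ℤ)) - binomC (2 * m) ((m : ℤ) - (r : ℤ) - 1)) *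
          b (2 * r) := by
  intro m
  rw [pow_eq_sum_Bfun b hb0 hrec (2 * m)]
  have hsplit : (∑ j ∈ Finset.range (2 * m + 1),
        ((2 * m).choose j : ℝ) * Bfun b (((2 * m : ℕ) : ℤ) - 2 * j))
      = (∑ j ∈ Finset.range (m + 1),
          ((2 * m).choose j : ℝ) * Bfun b (((2 * m : ℕ) : ℤ) - 2 * j))
        + ∑ j ∈ Finset.Ico (m + 1) (2 * m + 1),
            ((2 * m).choose j : ℝ) * Bfun b (((2 * m : ℕ) : ℤ) - 2 * j) := by
    simp only [Finset.range_eq_Ico]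
    rw [← Finset.sum_Ico_consecutive _ (by omega : 0 ≤ m + 1) (by omega : m + 1 ≤ 2 * m + 1)]
  rw [hsplit]
  have hupper : (∑ j ∈ Finset.Ico (m + 1) (2 * m + 1),
        ((2 * m).choose j : ℝ) * Bfun b (((2 * m : ℕ) : ℤ) - 2 * j))
      = ∑ r ∈ Finset.range m, -(((2 * m).choose (m + 1 + r) : ℝ) * b (2 * r)) := by
    rw [Finset.sum_Ico_eq_sum_range]
    have hm : 2 * m + 1 - (m + 1) = m := by omega
    rw [hm]
    refine Finset.sum_congr rfl fun r hr => ?_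
    have hr' : r < m := Finset.mem_range.mp hr
    have harg : (((2 * m : ℕ)) : ℤ) - 2 * ((m + 1 + r : ℕ) : ℤ) = -((2 * r : ℕ) : ℤ) - 2 := by
      push_cast; ring
    rw [harg, Bfun_neg _ _ (by omega)]
    have ht : (-(-((2 * r : ℕ) : ℤ) - 2) - 2).toNat = 2 * r := by omega
    rw [ht]
    ring
  rw [hupper]
  have hrhs : ∀ r ∈ Finset.range (m + 1),
      (binomC (2 * m) ((m : ℤ) - (r : ℤ)) - binomC (2 * m) ((m : ℤ) - (r : ℤ) - 1)) * b (2 * r)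
      = ((2 * m).choose (m - r) : ℝ) * b (2 * r)
        - (if r < m then (((2 * m).choose (m + 1 + r) : ℝ) * b (2 * r)) else 0) := by
    intro r hr
    have hr' : r ≤ m := by have := Finset.mem_range.mp hr; omega
    have h1 : binomC (2 * m) ((m : ℤ) - (r : ℤ)) = ((2 * m).choose (m - r) : ℝ) := by
      rw [binomC, if_neg (by omega)]
      have : ((m : ℤ) - (r : ℤ)).toNat = m - r := by omega
      rw [this]
    rcases lt_or_ge r m with hlt | hge
    · have h2 : binomC (2 * m) ((m : ℤ) - (r : ℤ) - 1) = ((2 * m).choose (m + 1 + r) : ℝ) := by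
        rw [binomC, if_neg (by omega)]
        have ht : ((m : ℤ) - (r : ℤ) - 1).toNat = m - r - 1 := by omega
        rw [ht]
        have h3 := Nat.choose_symm (show m + 1 + r ≤ 2 * m by omega)
        have he : 2 * m - (m + 1 + r) = m - r - 1 := by omega
        rw [he] at h3
        rw [h3]
      rw [h1, h2, if_pos hlt]
      ring
    · have h2 : binomC (2 * m) ((m : ℤ) - (r : ℤ) - 1) = 0 := by
        rw [binomC, if_pos (by omega)]
      rw [h1, h2, if_neg (by omega : ¬ r < m)]
      ring
  rw [Finset.sum_congr rfl hrhs, Finset.sum_sub_distrib]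
  have hlow : (∑ j ∈ Finset.range (m + 1),
        ((2 * m).choose j : ℝ) * Bfun b (((2 * m : ℕ) : ℤ) - 2 * j))
      = ∑ r ∈ Finset.range (m + 1), ((2 * m).choose (m - r) : ℝ) * b (2 * r) := by
    have hstep1 : (∑ j ∈ Finset.range (m + 1),
          ((2 * m).choose j : ℝ) * Bfun b (((2 * m : ℕ) : ℤ) - 2 * j))
        = ∑ j ∈ Finset.range (m + 1), ((2 * m).choose j : ℝ) * b (2 * (m - j)) := by
      refine Finset.sum_congr rfl fun j hj => ?_
      have hj' : j ≤ m := by have := Finset.mem_range.mp hj; omega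
      have harg : (((2 * m : ℕ)) : ℤ) - 2 * (j : ℤ) = ((2 * (m - j) : ℕ) : ℤ) := by
        push_cast [Nat.sub_add_cancel]; omega
      rw [harg, Bfun_ofNat]
    rw [hstep1, ← Finset.sum_range_reflect (fun j => ((2 * m).choose j : ℝ) * b (2 * (m - j)))]
    refine Finset.sum_congr rfl fun r hr => ?_
    have hr' : r ≤ m := by have := Finset.mem_range.mp hr; omega
    have e1 : m + 1 - 1 - r = m - r := by omega
    have e2 : m - (m - r) = r := by omega
    rw [e1, e2]
  rw [hlow]
  have hup2 : (∑ r ∈ Finset.range (m + 1),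
        (if r < m then (((2 * m).choose (m + 1 + r) : ℝ) * b (2 * r)) else 0))
      = ∑ r ∈ Finset.range m, ((2 * m).choose (m + 1 + r) : ℝ) * b (2 * r) := by
    rw [Finset.sum_range_succ, if_neg (lt_irrefl m), add_zero]
    exact Finset.sum_congr rfl fun r hr => if_pos (Finset.mem_range.mp hr)
  rw [hup2, Finset.sum_neg_distrib]
  ring
end

section
/- Let b : ℕ → ℝ satisfy b(0) = 1 and the Hecke recursion b(1)·b(r) = b(r+1) + b(r−1) for all integers r ≥ 1. Then for every natural number m, b(1)^{2m+1} = Σ_{r=0}^{m} ( C(2m+1, m−r) − C(2m+1, m−r−1) ) · b(2r+1), where C(n, j) denotes the binomial coefficient and C(n, −1) = 0. -/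
/-- Extension of `b` to integer indices, antisymmetric about `-1`. -/
noncomputable def Bext (b : ℕ → ℝ) (j : ℤ) : ℝ :=
  if 0 ≤ j then b j.toNat else if j = -1 then 0 else -b (-j - 2).toNat

lemma Bext_nonneg (b : ℕ → ℝ) (j : ℤ) (hj : 0 ≤ j) (n : ℕ) (hn : j = n) :
    Bext b j = b n := by
  simp only [Bext, if_pos hj]
  rw [show j.toNat = n by omega]

lemma Bext_neg (b : ℕ → ℝ) (j : ℤ) (hj : j ≤ -2) (n : ℕ) (hn : -j - 2 = n) :
    Bext b j = -b n := by
  simp only [Bext, if_neg (by omega : ¬ 0 ≤ j), if_neg (by omega : ¬ j = -1)]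
  rw [show (-j - 2).toNat = n by omega]

lemma Bext_negone (b : ℕ → ℝ) : Bext b (-1) = 0 := by
  simp [Bext]

lemma brec (b : ℕ → ℝ) (hb0 : b 0 = 1)
    (hrec : ∀ r : ℕ, 1 ≤ r → b 1 * b r = b (r + 1) + b (r - 1)) (j : ℤ) :
    b 1 * Bext b j = Bext b (j + 1) + Bext b (j - 1) := by
  rcases le_or_gt 1 j with h | h
  · obtain ⟨n, rfl⟩ : ∃ n : ℕ, j = (n : ℤ) + 1 := ⟨(j - 1).toNat, by omega⟩
    have h1 := hrec (n + 1) (by omega)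
    rw [Bext_nonneg b _ (by omega) (n + 1) (by push_cast; ring),
      Bext_nonneg b _ (by omega) (n + 2) (by push_cast; ring),
      Bext_nonneg b _ (by omega) n (by push_cast; ring)]
    simpa using h1
  · rcases le_or_gt (-2) j with h2 | h2
    · obtain rfl | rfl | rfl : j = 0 ∨ j = -1 ∨ j = -2 := by omega
      · rw [Bext_nonneg b _ (by omega) 0 (by norm_num),
          Bext_nonneg b _ (by omega) 1 (by norm_num),
          show (0:ℤ) - 1 = -1 by ring, Bext_negone, hb0]
        ring
      · rw [Bext_negone, show (-1:ℤ) + 1 = 0 by ring,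
          Bext_nonneg b _ (by omega) 0 (by norm_num),
          Bext_neg b _ (by omega) 0 (by norm_num), hb0]
        ring
      · rw [Bext_neg b _ (by omega) 0 (by norm_num),
          show (-2:ℤ) + 1 = -1 by ring, Bext_negone,
          Bext_neg b _ (by omega) 1 (by norm_num), hb0]
        ring
    · obtain ⟨n, rfl⟩ : ∃ n : ℕ, j = -((n : ℤ) + 3) := ⟨(-j - 3).toNat, by omega⟩
      have h1 := hrec (n + 1) (by omega)
      rw [Bext_neg b _ (by omega) (n + 1) (by push_cast; ring),
        Bext_neg b _ (by omega) n (by push_cast; ring),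
        Bext_neg b _ (by omega) (n + 2) (by push_cast; ring)]
      simp only [Nat.add_sub_cancel] at h1
      linarith

lemma key (b : ℕ → ℝ) (hb0 : b 0 = 1)
    (hrec : ∀ r : ℕ, 1 ≤ r → b 1 * b r = b (r + 1) + b (r - 1)) :
    ∀ n : ℕ, b 1 ^ n =
      ∑ k ∈ Finset.range (n + 1), (n.choose k : ℝ) * Bext b ((n : ℤ) - 2 * k) := by
  intro n
  induction n with
  | zero =>
      simp [Bext_nonneg b 0 le_rfl 0 rfl, hb0]
  | succ n ih =>
      set g1 : ℕ → ℝ := fun k => (n.choose k : ℝ) * Bext b ((n : ℤ) - 2 * k + 1) with hg1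
      set g2 : ℕ → ℝ := fun k => (n.choose k : ℝ) * Bext b ((n : ℤ) - 2 * k - 1) with hg2
      have step : b 1 ^ (n + 1) =
          (∑ k ∈ Finset.range (n + 1), g1 k) + ∑ k ∈ Finset.range (n + 1), g2 k := by
        rw [← Finset.sum_add_distrib, pow_succ, ih, Finset.sum_mul]
        refine Finset.sum_congr rfl fun k _ => ?_
        simp only [hg1, hg2]
        rw [← mul_add, ← brec b hb0 hrec]
        ring
      rw [step]
      have hF : ∀ k : ℕ, (((n+1).choose (k+1) : ℝ)) * Bext b ((↑(n+1) : ℤ) - 2 * ↑(k+1))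
          = g2 k + g1 (k+1) := by
        intro k
        simp only [hg1, hg2]
        rw [show ((↑(n+1) : ℤ) - 2 * ↑(k+1)) = (n : ℤ) - 2 * k - 1 by push_cast; ring,
          show ((n : ℤ) - 2 * ↑(k+1) + 1) = (n : ℤ) - 2 * k - 1 by push_cast; ring,
          Nat.choose_succ_succ']
        push_cast
        ring
      rw [Finset.sum_range_succ'
        (fun k => (((n+1).choose k : ℝ)) * Bext b ((↑(n+1) : ℤ) - 2 * k)) (n+1)]
      simp only [hF]
      rw [Finset.sum_add_distrib]
      have hF0 : (((n+1).choose 0 : ℝ)) * Bext b ((↑(n+1) : ℤ) - 2 * (0:ℕ)) = g1 0 := by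
        simp only [hg1]
        norm_num
      rw [hF0]
      have hg1sum : (∑ k ∈ Finset.range (n + 1), g1 (k + 1)) + g1 0
          = ∑ k ∈ Finset.range (n + 1), g1 k := by
        rw [← Finset.sum_range_succ' g1 (n+1), Finset.sum_range_succ]
        simp [hg1, Nat.choose_succ_self]
      linarith [hg1sum]

theorem odd_power_hecke_expansion (b : ℕ → ℝ) (hb0 : b 0 = 1)
    (hrec : ∀ r : ℕ, 1 ≤ r → b 1 * b r = b (r + 1) + b (r - 1)) :
    ∀ m : ℕ, (b 1) ^ (2 * m + 1) =
      ∑ r ∈ Finset.range (m + 1),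
        (binomC (2 * m + 1) ((m : ℤ) - (r : ℤ)) - binomC (2 * m + 1) ((m : ℤ) - (r : ℤ) - 1)) *
          b (2 * r + 1) := by
  intro m
  have hk := key b hb0 hrec (2 * m + 1)
  -- split the range at m+1
  have hsplit : ∑ k ∈ Finset.range (2 * m + 1 + 1),
      ((2*m+1).choose k : ℝ) * Bext b ((↑(2*m+1) : ℤ) - 2 * k)
      = (∑ k ∈ Finset.range (m + 1), ((2*m+1).choose k : ℝ) * Bext b ((↑(2*m+1) : ℤ) - 2 * k))
        + ∑ i ∈ Finset.range (m + 1),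
            ((2*m+1).choose (m+1+i) : ℝ) * Bext b ((↑(2*m+1) : ℤ) - 2 * ↑(m+1+i)) := by
    rw [← Finset.sum_range_add_sum_Ico _ (by omega : m + 1 ≤ 2*m+1+1),
      Finset.sum_Ico_eq_sum_range]
    congr 1
    rw [show 2*m+1+1 - (m+1) = m+1 by omega]
  -- low part
  have hlow : (∑ k ∈ Finset.range (m + 1),
        ((2*m+1).choose k : ℝ) * Bext b ((↑(2*m+1) : ℤ) - 2 * k))
      = ∑ r ∈ Finset.range (m + 1), ((2*m+1).choose (m - r) : ℝ) * b (2*r+1) := by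
    rw [← Finset.sum_range_reflect
      (fun k => ((2*m+1).choose k : ℝ) * Bext b ((↑(2*m+1) : ℤ) - 2 * k)) (m+1)]
    refine Finset.sum_congr rfl fun r hr => ?_
    have hrm : r ≤ m := by simpa using Nat.lt_succ_iff.mp (Finset.mem_range.mp hr)
    rw [show m + 1 - 1 - r = m - r by omega,
      Bext_nonneg b _ (by push_cast; omega) (2*r+1) (by push_cast; omega)]
  -- high part
  have hhigh : (∑ i ∈ Finset.range (m + 1),
        ((2*m+1).choose (m+1+i) : ℝ) * Bext b ((↑(2*m+1) : ℤ) - 2 * ↑(m+1+i)))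
      = - ∑ r ∈ Finset.range m, ((2*m+1).choose (m - r - 1) : ℝ) * b (2*r+1) := by
    rw [Finset.sum_range_succ'
      (fun i => ((2*m+1).choose (m+1+i) : ℝ) * Bext b ((↑(2*m+1) : ℤ) - 2 * ↑(m+1+i))) m]
    have h0 : ((2*m+1).choose (m+1+0) : ℝ) * Bext b ((↑(2*m+1) : ℤ) - 2 * ↑(m+1+0)) = 0 := by
      rw [show ((↑(2*m+1) : ℤ) - 2 * ↑(m+1+0)) = -1 by push_cast; ring, Bext_negone]
      ring
    rw [h0, add_zero, ← Finset.sum_neg_distrib]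
    refine Finset.sum_congr rfl fun r hr => ?_
    have hrm : r < m := Finset.mem_range.mp hr
    have hj1 : ((↑(2*m+1) : ℤ) - 2 * ↑(m+1+(r+1))) ≤ -2 := by push_cast; omega
    have hj2 : -((↑(2*m+1) : ℤ) - 2 * ↑(m+1+(r+1))) - 2 = ((2*r+1 : ℕ) : ℤ) := by
      push_cast; ring
    rw [Bext_neg b ((↑(2*m+1) : ℤ) - 2 * ↑(m+1+(r+1))) hj1 (2*r+1) hj2]
    rw [show m + 1 + (r + 1) = m + 2 + r by omega,
      show (2*m+1).choose (m+2+r) = (2*m+1).choose (m - r - 1) by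
        rw [show m - r - 1 = 2*m+1 - (m+2+r) by omega]
        exact (Nat.choose_symm (show m+2+r ≤ 2*m+1 by omega)).symm]
    ring
  -- right-hand side
  have hrhs : (∑ r ∈ Finset.range (m + 1),
        (binomC (2*m+1) ((m : ℤ) - r) - binomC (2*m+1) ((m : ℤ) - r - 1)) * b (2*r+1))
      = (∑ r ∈ Finset.range (m + 1), ((2*m+1).choose (m - r) : ℝ) * b (2*r+1))
        - ∑ r ∈ Finset.range m, ((2*m+1).choose (m - r - 1) : ℝ) * b (2*r+1) := by
    have e1 : ∀ r ∈ Finset.range (m + 1),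
        (binomC (2*m+1) ((m : ℤ) - r) - binomC (2*m+1) ((m : ℤ) - r - 1)) * b (2*r+1)
        = ((2*m+1).choose (m - r) : ℝ) * b (2*r+1)
          - binomC (2*m+1) ((m : ℤ) - r - 1) * b (2*r+1) := by
      intro r hr
      have hrm : r ≤ m := Nat.lt_succ_iff.mp (Finset.mem_range.mp hr)
      rw [show binomC (2*m+1) ((m : ℤ) - r) = ((2*m+1).choose (m - r) : ℝ) by
        unfold binomC
        rw [if_neg (by omega : ¬ ((m:ℤ) - r < 0)), show ((m:ℤ) - r).toNat = m - r by omega]]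
      ring
    rw [Finset.sum_congr rfl e1, Finset.sum_sub_distrib]
    congr 1
    rw [Finset.sum_range_succ, show ((m:ℤ) - m - 1) = -1 by ring]
    rw [show binomC (2*m+1) (-1) = 0 by unfold binomC; norm_num]
    rw [zero_mul, add_zero]
    refine Finset.sum_congr rfl fun r hr => ?_
    have hrm : r < m := Finset.mem_range.mp hr
    rw [show binomC (2*m+1) ((m : ℤ) - r - 1) = ((2*m+1).choose (m - r - 1) : ℝ) by
      unfold binomC
      rw [if_neg (by omega : ¬ ((m:ℤ) - r - 1 < 0)),
        show ((m:ℤ) - r - 1).toNat = m - r - 1 by omega]]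
  rw [hk, hsplit, hlow, hhigh, hrhs]
  ring
end
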